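/- If X is a locally compact well-filtered T₀ space, then the upper Vietoris topology and the Scott topology (of the Smyth order) on K(X) coincide. -/

import Mathlib

open Set Topology TopologicalSpace

universe u v

/-- A subset of a topological space is *saturated* if it equals the intersection of the
open sets containing it. -/
def IsSat {X : Type u} [TopologicalSpace X] (A : Set X) : Prop :=
  A = ⋂₀ {U : Set X | IsOpen U ∧ A ⊆ U}

/-- The saturation `↑a` of a point `a` : the intersection of all open sets containing `a`. -/
def satPt {X : Type u} [TopologicalSpace X] (a : X) : Set X :=
  ⋂₀ {U : Set X | IsOpen U ∧ a ∈ U}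

/-- `KS X` is the collection of all nonempty compact saturated subsets of `X`. -/
def KS (X : Type u) [TopologicalSpace X] : Type u :=
  {K : Set X // K.Nonempty ∧ IsCompact K ∧ IsSat K}

/-- The *Smyth order* on `KS X` : `K ≤ L` iff `L ⊆ K` (reverse inclusion). -/
instance KS.instPartialOrder {X : Type u} [TopologicalSpace X] : PartialOrder (KS X) where
  le K L := L.1 ⊆ K.1
  le_refl K := subset_rfl
  le_trans K L M h₁ h₂ := by intro x hx; exact h₁ (h₂ hx)
  le_antisymm K L h₁ h₂ := by exact Subtype.ext (subset_antisymm h₂ h₁)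

/-- The *upper Vietoris topology* on `KS X`, generated by the sets `□U = {K | K ⊆ U}`
for `U` open in `X`.  The resulting space is the Smyth power space `P_S(X)`. -/
def upperVietoris (X : Type u) [TopologicalSpace X] : TopologicalSpace (KS X) :=
  TopologicalSpace.generateFrom
    {S : Set (KS X) | ∃ U : Set X, IsOpen U ∧ S = {K : KS X | K.1 ⊆ U}}

/-- Scott-open subsets of a preorder: upper sets inaccessible by suprema of
(nonempty) directed sets. -/
def ScottOpen {P : Type u} [Preorder P] (U : Set P) : Prop :=
  IsUpperSet U ∧ ∀ d : Set P, d.Nonempty → DirectedOn (· ≤ ·) d →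
    ∀ a : P, IsLUB d a → a ∈ U → (d ∩ U).Nonempty

/-- The Scott topology of a preorder. -/
def scottTop (P : Type u) [Preorder P] : TopologicalSpace P where
  IsOpen := ScottOpen
  isOpen_univ := ⟨isUpperSet_univ, fun d hd _ _ _ _ => by simpa using hd⟩
  isOpen_inter := by
    rintro U V ⟨hUu, hUd⟩ ⟨hVu, hVd⟩
    refine ⟨hUu.inter hVu, fun d hd hdir a ha haUV => ?_⟩
    obtain ⟨x, hxd, hxU⟩ := hUd d hd hdir a ha haUV.1
    obtain ⟨y, hyd, hyV⟩ := hVd d hd hdir a ha haUV.2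
    obtain ⟨z, hzd, hxz, hyz⟩ := hdir x hxd y hyd
    exact ⟨z, hzd, hUu hxz hxU, hVu hyz hyV⟩
  isOpen_sUnion := by
    intro S hS
    refine ⟨isUpperSet_sUnion fun s hs => (hS s hs).1, fun d hd hdir a ha haU => ?_⟩
    obtain ⟨t, htS, hat⟩ := haU
    obtain ⟨x, hxd, hxt⟩ := (hS t htS).2 d hd hdir a ha hat
    exact ⟨x, hxd, t, htS, hxt⟩

/-- A topological space is *well-filtered* if for every nonempty family of nonempty compact
saturated sets which is filtered under reverse inclusion and every open `U` containing the
intersection of the family, some member of the family is contained in `U`. -/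
def WellFiltered (X : Type u) [TopologicalSpace X] : Prop :=
  ∀ 𝒦 : Set (Set X), 𝒦.Nonempty →
    (∀ K ∈ 𝒦, K.Nonempty ∧ IsCompact K ∧ IsSat K) →
    (∀ K₁ ∈ 𝒦, ∀ K₂ ∈ 𝒦, ∃ K₃ ∈ 𝒦, K₃ ⊆ K₁ ∧ K₃ ⊆ K₂) →
    ∀ U : Set X, IsOpen U → ⋂₀ 𝒦 ⊆ U → ∃ K ∈ 𝒦, K ⊆ U

/-- The specialization order of a topological space: `x ≤ y` iff `x ∈ cl {y}`. -/
def specLE {X : Type u} [TopologicalSpace X] (x y : X) : Prop := x ∈ closure {y}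

/-- Least upper bound with respect to an explicit relation. -/
def RelLUB {P : Type u} (r : P → P → Prop) (d : Set P) (a : P) : Prop :=
  (∀ x ∈ d, r x a) ∧ ∀ b : P, (∀ x ∈ d, r x b) → r a b

/-- Scott openness with respect to an explicit relation. -/
def RelScottOpen {P : Type u} (r : P → P → Prop) (U : Set P) : Prop :=
  (∀ ⦃x y : P⦄, x ∈ U → r x y → y ∈ U) ∧
  ∀ d : Set P, d.Nonempty → DirectedOn r d → ∀ a : P, RelLUB r d a → a ∈ U → (d ∩ U).Nonempty

/-- A `d`-space (monotone convergence space): the specialization order is directed complete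
and every open set is Scott open with respect to the specialization order. -/
def DSpace (X : Type u) [TopologicalSpace X] : Prop :=
  (∀ d : Set X, d.Nonempty → DirectedOn specLE d → ∃ a : X, RelLUB specLE d a) ∧
  ∀ U : Set X, IsOpen U → RelScottOpen specLE U

/-- A space is *sober* if every irreducible closed set is the closure of a unique point. -/
def SoberSp (Z : Type u) [TopologicalSpace Z] : Prop :=
  ∀ A : Set Z, IsClosed A → IsIrreducible A → ∃! z : Z, A = closure {z}

/-- A closed set `A` is a *Rudin set* if there is a (nonempty) family of nonempty compact
saturated sets, filtered under reverse inclusion, such that `A` is a minimal closed set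
meeting every member of the family. -/
def RudinSet {X : Type u} [TopologicalSpace X] (A : Set X) : Prop :=
  IsClosed A ∧
  ∃ 𝒦 : Set (Set X), 𝒦.Nonempty ∧
    (∀ K ∈ 𝒦, K.Nonempty ∧ IsCompact K ∧ IsSat K) ∧
    (∀ K₁ ∈ 𝒦, ∀ K₂ ∈ 𝒦, ∃ K₃ ∈ 𝒦, K₃ ⊆ K₁ ∧ K₃ ⊆ K₂) ∧
    (∀ K ∈ 𝒦, (A ∩ K).Nonempty) ∧
    (∀ B : Set X, IsClosed B → (∀ K ∈ 𝒦, (B ∩ K).Nonempty) → B ⊆ A → B = A)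

/-- A *Rudin space*: every irreducible closed subset is a Rudin set. -/
def RudinSpace (X : Type u) [TopologicalSpace X] : Prop :=
  ∀ A : Set X, IsClosed A → IsIrreducible A → RudinSet A

/-- A closed set `A` is *well-filtered determined* (WD) if every continuous map into a
well-filtered T₀ space sends it to a set whose closure is a point closure. -/
def WDSet {X : Type u} [TopologicalSpace X] (A : Set X) : Prop :=
  ∀ (Y : Type v) [TopologicalSpace Y] [T0Space Y], WellFiltered Y →
    ∀ f : X → Y, Continuous f → ∃ y : Y, closure (f '' A) = closure {y}

/-- A *well-filtered determined (WD) space*: every irreducible closed subset is WD. -/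
def WDSpace (X : Type u) [TopologicalSpace X] : Prop :=
  ∀ A : Set X, IsClosed A → IsIrreducible A → WDSet.{u, v} A

/-- Property S: for every irreducible closed set `A`, the family `{↑a : a ∈ A}` is an
irreducible subset of the Scott power space `Σ K(X)`, or
`◇A = {K ∈ K(X) : K ∩ A ≠ ∅}` is an irreducible closed subset of `Σ K(X)`. -/
def PropertyS (X : Type u) [TopologicalSpace X] : Prop :=
  ∀ A : Set X, IsClosed A → IsIrreducible A →
    @IsIrreducible (KS X) (scottTop (KS X)) {K : KS X | ∃ a ∈ A, K.1 = satPt a} ∨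
    (@IsClosed (KS X) (scottTop (KS X)) {K : KS X | (K.1 ∩ A).Nonempty} ∧
      @IsIrreducible (KS X) (scottTop (KS X)) {K : KS X | (K.1 ∩ A).Nonempty})

/-- The order of Jia's dcpo on `ℕ × ℕ × (ℕ ∪ {∞})`:
`(i₁,j₁,k₁) ≤ (i₂,j₂,k₂)` iff (`i₁ = i₂`, `j₁ = j₂` and `k₁ ≤ k₂`) or
(`i₂ = i₁ + 1`, `k₁ ≤ j₂` and `k₂ = ∞`). -/
def LJiaLE (a b : ℕ × ℕ × WithTop ℕ) : Prop :=
  (a.1 = b.1 ∧ a.2.1 = b.2.1 ∧ a.2.2 ≤ b.2.2) ∨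
  (b.1 = a.1 + 1 ∧ a.2.2 ≤ (b.2.1 : WithTop ℕ) ∧ b.2.2 = ⊤)

section Aux

variable {X : Type u} [TopologicalSpace X]

/-- The saturation operator. -/
def satn (A : Set X) : Set X := ⋂₀ {U : Set X | IsOpen U ∧ A ⊆ U}

lemma subset_satn (A : Set X) : A ⊆ satn A :=
  fun _ hx => mem_sInter.2 fun _ hU => hU.2 hx

lemma satn_subset {A U : Set X} (hU : IsOpen U) (h : A ⊆ U) : satn A ⊆ U :=
  sInter_subset_of_mem ⟨hU, h⟩

lemma satn_mono {A B : Set X} (h : A ⊆ B) : satn A ⊆ satn B :=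
  sInter_subset_sInter fun U hU => ⟨hU.1, h.trans hU.2⟩

lemma isSat_iff {A : Set X} : IsSat A ↔ A = satn A := Iff.rfl

lemma isSat_satn (A : Set X) : IsSat (satn A) :=
  subset_antisymm (subset_satn _)
    (sInter_subset_sInter fun U hU => ⟨hU.1, satn_subset hU.1 hU.2⟩)

lemma isCompact_satn {A : Set X} (hA : IsCompact A) : IsCompact (satn A) := by
  refine isCompact_of_finite_subcover fun {ι} U hUo hcov => ?_
  obtain ⟨t, ht⟩ := hA.elim_finite_subcover U hUo ((subset_satn A).trans hcov)
  exact ⟨t, satn_subset (isOpen_biUnion fun i _ => hUo i) ht⟩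

lemma isSat_sInter' {𝒦 : Set (Set X)} (h : ∀ K ∈ 𝒦, IsSat K) : IsSat (⋂₀ 𝒦) := by
  show ⋂₀ 𝒦 = satn (⋂₀ 𝒦)
  refine subset_antisymm (subset_satn _) fun x hx => mem_sInter.2 fun K hK => ?_
  have h1 : satn (⋂₀ 𝒦) ⊆ satn K := satn_mono (sInter_subset_of_mem hK)
  rw [← isSat_iff.1 (h K hK)] at h1
  exact h1 hx

lemma wf_sInter_compact (hwf : WellFiltered X) (𝒦 : Set (Set X)) (hne : 𝒦.Nonempty)
    (hmem : ∀ K ∈ 𝒦, K.Nonempty ∧ IsCompact K ∧ IsSat K)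
    (hdir : ∀ K₁ ∈ 𝒦, ∀ K₂ ∈ 𝒦, ∃ K₃ ∈ 𝒦, K₃ ⊆ K₁ ∧ K₃ ⊆ K₂) :
    IsCompact (⋂₀ 𝒦) := by
  refine isCompact_of_finite_subcover fun {ι} U hUo hcov => ?_
  obtain ⟨K, hK, hKU⟩ := hwf 𝒦 hne hmem hdir (⋃ i, U i) (isOpen_iUnion hUo) hcov
  obtain ⟨t, ht⟩ := (hmem K hK).2.1.elim_finite_subcover U hUo hKU
  exact ⟨t, (sInter_subset_of_mem hK).trans ht⟩

lemma wf_sInter_nonempty (hwf : WellFiltered X) (𝒦 : Set (Set X)) (hne : 𝒦.Nonempty)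
    (hmem : ∀ K ∈ 𝒦, K.Nonempty ∧ IsCompact K ∧ IsSat K)
    (hdir : ∀ K₁ ∈ 𝒦, ∀ K₂ ∈ 𝒦, ∃ K₃ ∈ 𝒦, K₃ ⊆ K₁ ∧ K₃ ⊆ K₂) :
    (⋂₀ 𝒦).Nonempty := by
  by_contra h
  rw [not_nonempty_iff_eq_empty] at h
  obtain ⟨K, hK, hKU⟩ := hwf 𝒦 hne hmem hdir ∅ isOpen_empty (h ▸ subset_rfl)
  exact (hmem K hK).1.ne_empty (subset_empty_iff.1 hKU)

lemma KS.le_iff {K L : KS X} : K ≤ L ↔ L.1 ⊆ K.1 := Iff.rfl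

/-- The element of `KS X` obtained by saturating a nonempty compact set. -/
def KS.ofCompact {Q : Set X} (hne : Q.Nonempty) (hQ : IsCompact Q) : KS X :=
  ⟨satn Q, hne.mono (subset_satn Q), isCompact_satn hQ, isSat_satn Q⟩

end Aux

/-- If `X` is a locally compact well-filtered `T₀` space, then the upper
Vietoris topology and the Scott topology (of the Smyth order) on `K(X)` coincide. -/
theorem stmt3 {X : Type u} [TopologicalSpace X] [T0Space X] [LocallyCompactSpace X]
    (hwf : WellFiltered X) :
    upperVietoris X = scottTop (KS X) := by
  apply le_antisymm
  · -- every Scott open set is open in the upper Vietoris topology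
    rw [TopologicalSpace.le_def]
    intro s hs
    replace hs : ScottOpen s := hs
    have key : ∀ K ∈ s, ∃ U : Set X, IsOpen U ∧ K.1 ⊆ U ∧ {L : KS X | L.1 ⊆ U} ⊆ s := by
      intro K hK
      -- the directed family of saturated compact neighborhoods of K
      set d : Set (KS X) := {L : KS X | K.1 ⊆ interior L.1} with hd
      have hmemd : ∀ {Q : Set X} (hne : Q.Nonempty) (hQ : IsCompact Q),
          K.1 ⊆ interior Q → KS.ofCompact hne hQ ∈ d := by
        intro Q hne hQ hint
        exact hint.trans (interior_mono (subset_satn Q))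
      have hdne : d.Nonempty := by
        obtain ⟨Q, hQc, hQi, -⟩ := exists_compact_between K.2.2.1 isOpen_univ (subset_univ _)
        exact ⟨KS.ofCompact (K.2.1.mono (hQi.trans interior_subset)) hQc, hmemd _ _ hQi⟩
      have hdd : DirectedOn (· ≤ ·) d := by
        intro L₁ hL₁ L₂ hL₂
        have hV : IsOpen (interior L₁.1 ∩ interior L₂.1) := isOpen_interior.inter isOpen_interior
        obtain ⟨Q, hQc, hQi, hQV⟩ := exists_compact_between K.2.2.1 hV (subset_inter hL₁ hL₂)
        have hQne : Q.Nonempty := K.2.1.mono (hQi.trans interior_subset)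
        refine ⟨KS.ofCompact hQne hQc, hmemd _ _ hQi, ?_, ?_⟩
        · exact (satn_subset hV hQV).trans (fun x hx => interior_subset hx.1)
        · exact (satn_subset hV hQV).trans (fun x hx => interior_subset hx.2)
      have hlub : IsLUB d K := by
        constructor
        · intro L hL
          exact Set.Subset.trans (hL : K.1 ⊆ interior L.1) interior_subset
        · intro b hb
          show b.1 ⊆ K.1
          rw [isSat_iff.1 K.2.2.2]
          intro x hx
          refine mem_sInter.2 fun U hU => ?_
          obtain ⟨Q, hQc, hQi, hQU⟩ := exists_compact_between K.2.2.1 hU.1 hU.2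
          have hQne : Q.Nonempty := K.2.1.mono (hQi.trans interior_subset)
          have := hb (hmemd hQne hQc hQi)
          exact satn_subset hU.1 hQU (this hx)
      obtain ⟨L, hLd, hLs⟩ := hs.2 d hdne hdd K hlub hK
      refine ⟨interior L.1, isOpen_interior, hLd, fun K' hK' => ?_⟩
      exact hs.1 (show L ≤ K' from Set.Subset.trans (hK' : K'.1 ⊆ interior L.1) interior_subset) hLs
    have hrw : s = ⋃₀ {T : Set (KS X) |
        (∃ U : Set X, IsOpen U ∧ T = {L : KS X | L.1 ⊆ U}) ∧ T ⊆ s} := by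
      ext K
      constructor
      · intro hK
        obtain ⟨U, hU, hKU, hsub⟩ := key K hK
        exact ⟨{L : KS X | L.1 ⊆ U}, ⟨⟨U, hU, rfl⟩, hsub⟩, hKU⟩
      · rintro ⟨T, ⟨_, hTs⟩, hKT⟩
        exact hTs hKT
    rw [hrw]
    exact TopologicalSpace.GenerateOpen.sUnion _
      fun T hT => TopologicalSpace.GenerateOpen.basic T hT.1
  · -- every basic upper Vietoris open set is Scott open
    rw [upperVietoris, TopologicalSpace.le_generateFrom_iff_subset_isOpen]
    rintro S ⟨U, hU, rfl⟩
    show ScottOpen {K : KS X | K.1 ⊆ U}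
    constructor
    · intro K L hKL hKU
      exact (KS.le_iff.mp hKL).trans hKU
    · intro d hdne hdd a ha haU
      set 𝒦 : Set (Set X) := Subtype.val '' d with h𝒦
      have h𝒦ne : 𝒦.Nonempty := hdne.image _
      have h𝒦mem : ∀ K ∈ 𝒦, K.Nonempty ∧ IsCompact K ∧ IsSat K := by
        rintro K ⟨L, -, rfl⟩; exact L.2
      have h𝒦dir : ∀ K₁ ∈ 𝒦, ∀ K₂ ∈ 𝒦, ∃ K₃ ∈ 𝒦, K₃ ⊆ K₁ ∧ K₃ ⊆ K₂ := by
        rintro K₁ ⟨L₁, hL₁, rfl⟩ K₂ ⟨L₂, hL₂, rfl⟩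
        obtain ⟨L₃, hL₃, h₁, h₂⟩ := hdd L₁ hL₁ L₂ hL₂
        exact ⟨L₃.1, ⟨L₃, hL₃, rfl⟩, h₁, h₂⟩
      -- the intersection of the family is an element of `KS X`
      set I : KS X := ⟨⋂₀ 𝒦, wf_sInter_nonempty hwf 𝒦 h𝒦ne h𝒦mem h𝒦dir,
        wf_sInter_compact hwf 𝒦 h𝒦ne h𝒦mem h𝒦dir,
        isSat_sInter' fun K hK => (h𝒦mem K hK).2.2⟩ with hI
      have hIub : I ∈ upperBounds d := by
        intro L hL
        exact sInter_subset_of_mem ⟨L, hL, rfl⟩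
      have haI : ⋂₀ 𝒦 ⊆ a.1 := ha.2 hIub
      obtain ⟨K, hK𝒦, hKU⟩ := hwf 𝒦 h𝒦ne h𝒦mem h𝒦dir U hU (haI.trans haU)
      obtain ⟨L, hLd, rfl⟩ := hK𝒦
      exact ⟨L, hLd, hKU⟩
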